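/- arXiv:1805.09260 — 2 statements merged into one kernel-verified Lean document; each statement's English description precedes it below -/
import Mathlib

section
/- Let m > 0, m_s > 0, a > 0 and let f be the Fisher–Snedecor F density f(t) = a^m t^{m-1} / (B(m, m_s) (1 + a t)^{m + m_s}) on (0, ∞). Then for every x ≥ 0, writing z = a x / (1 + a x) ∈ [0, 1), the CDF F(x) = ∫_0^x f(t) dt satisfies F(x) = z^m · ₂F₁(m, 1 − m_s; m + 1; z) / (m · B(m, m_s)), where ₂F₁ denotes the Gauss ordinary hypergeometric function (given by its power series, which converges since 0 ≤ z < 1). -/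
open MeasureTheory Real Set Filter Polynomial

set_option maxHeartbeats 1000000

/-- The real Beta function `B(p, q) = Γ(p) Γ(q) / Γ(p + q)`. -/
noncomputable def betaR (p q : ℝ) : ℝ := Real.Gamma p * Real.Gamma q / Real.Gamma (p + q)

/-- The Fisher–Snedecor F density. -/
noncomputable def fsDens (m ms a x : ℝ) : ℝ :=
  if 0 < x then a ^ m * x ^ (m - 1) / (betaR m ms * (1 + a * x) ^ (m + ms)) else 0

/-- The Gauss hypergeometric function `₂F₁(α, β; γ; z)`, defined by its power series
`∑_{n ≥ 0} ((α)_n (β)_n / (γ)_n) zⁿ / n!`, where `(·)_n` is the ascending Pochhammer symbol. -/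
noncomputable def gauss2F1 (α β γ z : ℝ) : ℝ :=
  ∑' n : ℕ,
    (Polynomial.eval α (ascPochhammer ℝ n) * Polynomial.eval β (ascPochhammer ℝ n) /
        Polynomial.eval γ (ascPochhammer ℝ n)) * z ^ n / (n.factorial : ℝ)

noncomputable def fsC (ms : ℝ) (n : ℕ) : ℝ :=
  Polynomial.eval (1 - ms) (ascPochhammer ℝ n) / n.factorial

lemma fsC_zero (ms : ℝ) : fsC ms 0 = 1 := by simp [fsC]

lemma fsC_succ (ms : ℝ) (n : ℕ) :
    fsC ms (n + 1) * ((n : ℝ) + 1) = fsC ms n * ((1 - ms) + n) := by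
  have h : (n.factorial : ℝ) ≠ 0 := Nat.cast_ne_zero.2 n.factorial_ne_zero
  simp only [fsC, ascPochhammer_succ_eval, Nat.factorial_succ, Nat.cast_mul, Nat.cast_add,
    Nat.cast_one]
  field_simp

lemma abs_fsC_succ (ms : ℝ) (n : ℕ) :
    |fsC ms (n + 1)| * ((n : ℝ) + 1) = |fsC ms n| * |(1 - ms) + n| := by
  have h : |fsC ms (n + 1) * ((n : ℝ) + 1)| = |fsC ms n * ((1 - ms) + n)| := by
    rw [fsC_succ]
  rw [abs_mul, abs_mul] at h
  rwa [abs_of_pos (by positivity : (0:ℝ) < (n : ℝ) + 1)] at h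

lemma summable_fsU (ms r : ℝ) (hr0 : 0 ≤ r) (hr1 : r < 1) :
    Summable (fun n : ℕ => |fsC ms n| * ((n : ℝ) * r ^ (n - 1))) := by
  set r' : ℝ := (1 + r) / 2 with hr'
  have hr'1 : r' < 1 := by rw [hr']; linarith
  have hrr' : 0 < r' - r := by rw [hr']; linarith
  apply summable_of_ratio_norm_eventually_le hr'1
  obtain ⟨N, hN⟩ := exists_nat_ge (|1 - ms| * r / (r' - r))
  filter_upwards [eventually_ge_atTop (max N 1)] with n hn
  have hn1 : 1 ≤ n := le_trans (le_max_right _ _) hn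
  have hnN : (N : ℝ) ≤ (n : ℝ) := Nat.cast_le.2 (le_trans (le_max_left _ _) hn)
  obtain ⟨k, rfl⟩ : ∃ k, n = k + 1 := ⟨n - 1, (Nat.succ_pred_eq_of_pos hn1).symm⟩
  have hk1 : (0:ℝ) ≤ (k:ℝ) + 1 := by positivity
  have hN' : |1 - ms| * r ≤ (r' - r) * ((k:ℝ) + 1) := by
    have h2 : |1 - ms| * r / (r' - r) ≤ (k:ℝ) + 1 := hN.trans (by push_cast at hnN; linarith)
    have h := (div_le_iff₀ hrr').1 h2
    nlinarith
  have habs : |1 - ms + ((k:ℝ) + 1)| ≤ |1 - ms| + ((k:ℝ) + 1) := by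
    refine (abs_add_le _ _).trans ?_
    rw [abs_of_nonneg hk1]
  have key : |1 - ms + ((k:ℝ) + 1)| * r ≤ r' * ((k:ℝ) + 1) := by
    nlinarith [mul_le_mul_of_nonneg_right habs hr0]
  have A := abs_fsC_succ ms (k + 1)
  simp only [Nat.add_sub_cancel, Real.norm_eq_abs]
  push_cast at A ⊢
  simp only [abs_mul, abs_abs, abs_pow, abs_of_nonneg hr0, abs_of_nonneg hk1,
    abs_of_nonneg (show (0:ℝ) ≤ (k:ℝ) + 1 + 1 by positivity)]
  calc |fsC ms (k + 1 + 1)| * (((k:ℝ) + 1 + 1) * r ^ (k + 1))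
      = (|fsC ms (k + 1)| * |1 - ms + ((k:ℝ) + 1)|) * (r * r ^ k) := by
        rw [← A, pow_succ]; ring
    _ = (|1 - ms + ((k:ℝ) + 1)| * r) * (|fsC ms (k + 1)| * r ^ k) := by ring
    _ ≤ (r' * ((k:ℝ) + 1)) * (|fsC ms (k + 1)| * r ^ k) := by
        apply mul_le_mul_of_nonneg_right key (by positivity)
    _ = r' * (|fsC ms (k + 1)| * (((k:ℝ) + 1) * r ^ k)) := by ring

lemma fs_norm_bound {ms : ℝ} {e : ℕ → ℝ} (he : ∀ n, |e n| ≤ |fsC ms n|)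
    {r y : ℝ} (hr0 : 0 ≤ r) (hy : |y| ≤ r) (n : ℕ) :
    ‖e n * ((n : ℝ) * y ^ (n - 1))‖ ≤ |fsC ms n| * ((n : ℝ) * r ^ (n - 1)) := by
  rw [Real.norm_eq_abs, abs_mul, abs_mul, abs_pow]
  have h1 : |y| ^ (n - 1) ≤ r ^ (n - 1) := pow_le_pow_left₀ (abs_nonneg _) hy _
  have h2 : |(n:ℝ)| = (n:ℝ) := abs_of_nonneg (Nat.cast_nonneg _)
  rw [h2]
  have h3 : (n:ℝ) * |y| ^ (n - 1) ≤ (n:ℝ) * r ^ (n - 1) :=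
    mul_le_mul_of_nonneg_left h1 (Nat.cast_nonneg n)
  exact mul_le_mul (he n) h3 (by positivity) (abs_nonneg _)

lemma fs_summable_deriv {ms : ℝ} {e : ℕ → ℝ} (he : ∀ n, |e n| ≤ |fsC ms n|)
    {r : ℝ} (hr0 : 0 ≤ r) (hr1 : r < 1) {y : ℝ} (hy : |y| ≤ r) :
    Summable (fun n => e n * ((n : ℝ) * y ^ (n - 1))) :=
  (summable_fsU ms r hr0 hr1).of_norm_bounded (fs_norm_bound he hr0 hy)

lemma fs_summable {ms : ℝ} {e : ℕ → ℝ} (he : ∀ n, |e n| ≤ |fsC ms n|)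
    {r : ℝ} (hr0 : 0 ≤ r) (hr1 : r < 1) {y : ℝ} (hy : |y| ≤ r) :
    Summable (fun n => e n * y ^ n) := by
  apply (summable_fsU ms r hr0 hr1).of_norm_bounded_eventually_nat
  filter_upwards [eventually_ge_atTop 1] with n hn
  obtain ⟨k, rfl⟩ : ∃ k, n = k + 1 := ⟨n - 1, (Nat.succ_pred_eq_of_pos hn).symm⟩
  rw [Real.norm_eq_abs, abs_mul, abs_pow, Nat.add_sub_cancel]
  have h1 : |y| ^ (k + 1) ≤ r ^ k := by
    calc |y| ^ (k + 1) ≤ r ^ (k + 1) := pow_le_pow_left₀ (abs_nonneg _) hy _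
      _ = r ^ k * r := pow_succ r k
      _ ≤ r ^ k * 1 := mul_le_mul_of_nonneg_left hr1.le (pow_nonneg hr0 k)
      _ = r ^ k := mul_one _
  have e1 : |e (k+1)| * |y| ^ (k+1) ≤ |fsC ms (k+1)| * r ^ k :=
    mul_le_mul (he _) h1 (pow_nonneg (abs_nonneg _) _) (abs_nonneg _)
  have e2 : |fsC ms (k+1)| * r ^ k ≤ |fsC ms (k+1)| * (((k:ℝ)+1) * r ^ k) := by
    nlinarith [mul_nonneg (abs_nonneg (fsC ms (k+1))) (pow_nonneg hr0 k)]
  refine e1.trans (e2.trans ?_)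
  push_cast [Nat.add_sub_cancel]
  exact le_refl _

lemma fs_hasDerivAt {ms : ℝ} {e : ℕ → ℝ} (he : ∀ n, |e n| ≤ |fsC ms n|)
    {r : ℝ} (hr0 : 0 < r) (hr1 : r < 1) {y : ℝ} (hy : y ∈ Ioo (-r) r) :
    HasDerivAt (fun u => ∑' n, e n * u ^ n) (∑' n, e n * ((n : ℝ) * y ^ (n - 1))) y := by
  refine hasDerivAt_tsum_of_isPreconnected (summable_fsU ms r hr0.le hr1) isOpen_Ioo
    (isPreconnected_Ioo) (fun n u _ => (hasDerivAt_pow n u).const_mul (e n))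
    (fun n u hu => ?_) (show (0:ℝ) ∈ Ioo (-r) r by constructor <;> simp [hr0]) ?_ hy
  · exact fs_norm_bound he hr0.le (by rw [abs_le]; exact ⟨hu.1.le, hu.2.le⟩) n
  · apply summable_of_ne_finset_zero (s := {0})
    intro n hn
    simp only [Finset.mem_singleton] at hn
    simp [zero_pow hn]

lemma fs_mul_shift {e : ℕ → ℝ} (y : ℝ) :
    y * ∑' n, e n * ((n : ℝ) * y ^ (n - 1)) = ∑' n, e n * ((n : ℝ) * y ^ n) := by
  rw [← tsum_mul_left]
  apply tsum_congr
  intro n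
  match n with
  | 0 => simp
  | k + 1 => rw [Nat.add_sub_cancel, pow_succ]; ring

lemma fs_summable_mul_n {ms : ℝ} {e : ℕ → ℝ} (he : ∀ n, |e n| ≤ |fsC ms n|)
    {r : ℝ} (hr0 : 0 ≤ r) (hr1 : r < 1) {y : ℝ} (hy : |y| ≤ r) :
    Summable (fun n => e n * ((n : ℝ) * y ^ n)) := by
  apply ((fs_summable_deriv he hr0 hr1 hy).mul_left y).congr
  intro n
  match n with
  | 0 => simp
  | k + 1 => rw [Nat.add_sub_cancel, pow_succ]; ring

lemma fs_recurrence (ms : ℝ) {r : ℝ} (hr0 : 0 ≤ r) (hr1 : r < 1) {y : ℝ} (hy : |y| ≤ r) :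
    ∑' n, fsC ms n * ((n : ℝ) * y ^ (n - 1)) =
      (1 - ms) * (∑' n, fsC ms n * y ^ n) + ∑' n, fsC ms n * ((n : ℝ) * y ^ n) := by
  have he : ∀ n, |fsC ms n| ≤ |fsC ms n| := fun n => le_refl _
  rw [Summable.tsum_eq_zero_add (fs_summable_deriv he hr0 hr1 hy)]
  simp only [Nat.cast_zero, zero_mul, mul_zero, zero_add]
  have hterm : ∀ n : ℕ, fsC ms (n + 1) * (((n : ℕ) + 1 : ℝ) * y ^ (n + 1 - 1)) =
      (1 - ms) * (fsC ms n * y ^ n) + fsC ms n * ((n : ℝ) * y ^ n) := by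
    intro n
    rw [Nat.add_sub_cancel, show fsC ms (n+1) * (((n : ℕ) + 1 : ℝ) * y ^ n)
      = (fsC ms (n+1) * ((n : ℝ) + 1)) * y ^ n by ring, fsC_succ]
    ring
  calc ∑' n : ℕ, fsC ms (n + 1) * ((n + 1 : ℕ) * y ^ (n + 1 - 1))
      = ∑' n : ℕ, ((1 - ms) * (fsC ms n * y ^ n) + fsC ms n * ((n : ℝ) * y ^ n)) := by
        apply tsum_congr; intro n; push_cast; exact hterm n
    _ = (1 - ms) * (∑' n, fsC ms n * y ^ n) + ∑' n, fsC ms n * ((n : ℝ) * y ^ n) := by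
        rw [Summable.tsum_add ((fs_summable he hr0 hr1 hy).mul_left _)
          (fs_summable_mul_n he hr0 hr1 hy), tsum_mul_left]

lemma fsF_eq (ms u : ℝ) (hu0 : 0 ≤ u) (hu1 : u < 1) :
    ∑' n, fsC ms n * u ^ n = (1 - u) ^ (ms - 1) := by
  set r : ℝ := (1 + u) / 2 with hrdef
  have hr0 : 0 < r := by rw [hrdef]; linarith
  have hr1 : r < 1 := by rw [hrdef]; linarith
  have hur : u < r := by rw [hrdef]; linarith
  have he : ∀ n, |fsC ms n| ≤ |fsC ms n| := fun n => le_refl _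
  set F : ℝ → ℝ := fun v => ∑' n, fsC ms n * v ^ n with hFdef
  set H : ℝ → ℝ := fun v => F v * (1 - v) ^ (1 - ms) with hHdef
  have hsub : ∀ y ∈ Icc (0:ℝ) u, y ∈ Ioo (-r) r := fun y hy =>
    ⟨by have := hy.1; linarith, lt_of_le_of_lt hy.2 hur⟩
  have hHd : ∀ y ∈ Ioo (-r) r, HasDerivAt H 0 y := by
    intro y hy
    have hy1 : y < 1 := lt_of_lt_of_le hy.2 hr1.le
    have hpos : 0 < 1 - y := by linarith
    have habs : |y| ≤ r := by rw [abs_le]; exact ⟨hy.1.le, hy.2.le⟩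
    have hFd : HasDerivAt F (∑' n, fsC ms n * ((n:ℝ) * y ^ (n - 1))) y :=
      fs_hasDerivAt he hr0 hr1 hy
    have hrp : HasDerivAt (fun v : ℝ => (1 - v) ^ (1 - ms))
        (-1 * (1 - ms) * (1 - y) ^ (1 - ms - 1)) y :=
      ((hasDerivAt_id y).const_sub 1).rpow_const (Or.inl hpos.ne')
    have := hFd.mul hrp
    refine HasDerivAt.congr_deriv this (Eq.symm ?_)
    have hshift := fs_mul_shift (e := fsC ms) y
    have hrec := fs_recurrence ms hr0.le hr1 habs
    have hsplit : (1 - y) ^ (1 - ms) = (1 - y) ^ (1 - ms - 1) * (1 - y) := by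
      rw [show (1:ℝ) - ms = (1 - ms - 1) + 1 by ring, Real.rpow_add hpos, Real.rpow_one]
      ring_nf
    rw [hsplit]
    set T := ∑' n, fsC ms n * ((n:ℝ) * y ^ n)
    set D := ∑' n, fsC ms n * ((n:ℝ) * y ^ (n - 1))
    have h1 : y * D = T := hshift
    have h2 : D = (1 - ms) * F y + T := hrec
    linear_combination ((1 - y) ^ (1 - ms - 1)) * h1 - ((1 - y) ^ (1 - ms - 1)) * h2
  have hcont : ContinuousOn H (Icc 0 u) := fun y hy =>
    ((hHd y (hsub y hy)).continuousAt).continuousWithinAt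
  have hconst := constant_of_has_deriv_right_zero hcont
    (fun y hy => (hHd y (hsub y ⟨hy.1, hy.2.le⟩)).hasDerivWithinAt)
  have hHu : H u = H 0 := hconst u ⟨hu0, le_refl u⟩
  have hF0 : F 0 = 1 := by
    have h : F 0 = ∑' n : ℕ, fsC ms n * (0:ℝ) ^ n := rfl
    rw [h, tsum_eq_single 0 (fun n hn => by simp [zero_pow hn])]
    simp [fsC_zero]
  have hH0 : H 0 = 1 := by
    have h : H 0 = F 0 * (1 - (0:ℝ)) ^ (1 - ms) := rfl
    rw [h, hF0]; simp
  have hposu : 0 < 1 - u := by linarith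
  have hne : (1 - u) ^ (1 - ms) ≠ 0 := (Real.rpow_pos_of_pos hposu _).ne'
  have hkey : F u * (1 - u) ^ (1 - ms) = 1 := by
    have h : H u = F u * (1 - u) ^ (1 - ms) := rfl
    rw [← h, hHu, hH0]
  have hinv : (1 - u) ^ (ms - 1) * (1 - u) ^ (1 - ms) = 1 := by
    rw [← Real.rpow_add hposu]; norm_num
  exact mul_right_cancel₀ hne (hkey.trans hinv.symm)

lemma poch_id (m : ℝ) (n : ℕ) :
    Polynomial.eval m (ascPochhammer ℝ n) * (m + n) =
      m * Polynomial.eval (m + 1) (ascPochhammer ℝ n) := by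
  have h1 := ascPochhammer_succ_eval n m
  have h2 : (ascPochhammer ℝ (n+1)).eval m = m * (ascPochhammer ℝ n).eval (m+1) := by
    rw [ascPochhammer_succ_left]
    simp [Polynomial.eval_comp]
  rw [← h1, h2]

/-- The CDF of the Fisher–Snedecor F distribution in terms of the Gauss hypergeometric
function: `F(x) = zᵐ ₂F₁(m, 1 - ms; m + 1; z) / (m B(m, ms))` with `z = a x / (1 + a x)`. -/
theorem fsDens_cdf_eq_hypergeometric (m ms a : ℝ) (hm : 0 < m) (hms : 0 < ms)
    (ha : 0 < a) (x : ℝ) (hx : 0 ≤ x) :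
    ∫ t in (0 : ℝ)..x, fsDens m ms a t =
      (a * x / (1 + a * x)) ^ m *
        gauss2F1 m (1 - ms) (m + 1) (a * x / (1 + a * x)) / (m * betaR m ms) := by
  have hB : 0 < betaR m ms :=
    div_pos (mul_pos (Real.Gamma_pos_of_pos hm) (Real.Gamma_pos_of_pos hms))
      (Real.Gamma_pos_of_pos (by linarith))
  rcases eq_or_lt_of_le hx with h0 | hxpos
  · rw [← h0]
    simp [Real.zero_rpow hm.ne']
  -- now 0 < x
  have hden : 0 < 1 + a * x := by nlinarith
  set Z : ℝ := a * x / (1 + a * x) with hZdef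
  have hZ0 : 0 < Z := div_pos (mul_pos ha hxpos) hden
  have hZ1 : Z < 1 := (div_lt_one hden).2 (by nlinarith)
  set r : ℝ := (1 + Z) / 2 with hrdef
  have hr0 : 0 < r := by rw [hrdef]; linarith
  have hr1 : r < 1 := by rw [hrdef]; linarith
  have hZr : Z < r := by rw [hrdef]; linarith
  have hmn : ∀ n : ℕ, (0:ℝ) < m + n := fun n => by positivity
  set d : ℕ → ℝ := fun n => m * fsC ms n / (m + (n:ℝ)) with hddef
  have hdle : ∀ n, |d n| ≤ |fsC ms n| := by
    intro n
    rw [hddef]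
    dsimp only
    rw [abs_div, abs_mul, abs_of_pos hm, abs_of_pos (hmn n), div_le_iff₀ (hmn n)]
    nlinarith [abs_nonneg (fsC ms n), Nat.cast_nonneg (α := ℝ) n]
  set W : ℝ → ℝ := fun v => ∑' n, d n * v ^ n with hWdef
  -- Step A : gauss2F1 = W Z
  have hgauss : gauss2F1 m (1 - ms) (m + 1) Z = W Z := by
    rw [gauss2F1, hWdef]
    apply tsum_congr
    intro n
    have hp1 : 0 < Polynomial.eval (m + 1) (ascPochhammer ℝ n) :=
      ascPochhammer_pos n (m + 1) (by linarith)
    have hfac : (0:ℝ) < n.factorial := by positivity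
    have hid := poch_id m n
    rw [hddef]
    dsimp only
    rw [fsC]
    have hq : Polynomial.eval m (ascPochhammer ℝ n) =
        m * Polynomial.eval (m + 1) (ascPochhammer ℝ n) / (m + n) := by
      rw [eq_div_iff (hmn n).ne']; exact hid
    rw [hq]
    field_simp
  -- membership of the substitution
  have hzmem : ∀ t ∈ Icc (0:ℝ) x, a * t / (1 + a * t) ∈ Icc 0 Z := by
    intro t ht
    have h1t : 0 < 1 + a * t := by nlinarith [ht.1]
    constructor
    · exact div_nonneg (by nlinarith [ht.1]) h1t.le
    · rw [hZdef, div_le_div_iff₀ h1t hden]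
      nlinarith [ht.2, ht.1]
  have hsub : ∀ y ∈ Icc (0:ℝ) Z, y ∈ Ioo (-r) r :=
    fun y hy => ⟨by have := hy.1; linarith, lt_of_le_of_lt hy.2 hZr⟩
  have hWd : ∀ y ∈ Ioo (-r) r,
      HasDerivAt W (∑' n, d n * ((n:ℝ) * y ^ (n-1))) y :=
    fun y hy => fs_hasDerivAt hdle hr0 hr1 hy
  -- the key combination identity
  have hkeyW : ∀ y : ℝ, 0 ≤ y → y < 1 → |y| ≤ r →
      m * W y + y * (∑' n, d n * ((n:ℝ) * y ^ (n-1))) = m * (1 - y) ^ (ms - 1) := by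
    intro y hy0 hy1 hyr
    rw [fs_mul_shift]
    have h1 : m * W y = ∑' n, m * (d n * y ^ n) := by rw [hWdef]; exact tsum_mul_left.symm
    rw [h1, ← Summable.tsum_add ((fs_summable hdle hr0.le hr1 hyr).mul_left m)
      (fs_summable_mul_n hdle hr0.le hr1 hyr)]
    have h2 : ∀ n : ℕ, m * (d n * y ^ n) + d n * ((n:ℝ) * y ^ n) = m * (fsC ms n * y ^ n) := by
      intro n
      have h3 : m * d n + (n:ℝ) * d n = m * fsC ms n := by
        rw [hddef]; dsimp only; field_simp
      linear_combination y ^ n * h3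
    rw [tsum_congr h2, tsum_mul_left, fsF_eq ms y hy0 hy1]
  set G : ℝ → ℝ :=
    fun t => (a * t / (1 + a * t)) ^ m * W (a * t / (1 + a * t)) / (m * betaR m ms) with hGdef
  -- continuity of G on [0, x]
  have hcont : ContinuousOn G (Icc 0 x) := by
    intro t ht
    have h1t : 0 < 1 + a * t := by nlinarith [ht.1]
    have hz_at : ContinuousAt (fun t : ℝ => a * t / (1 + a * t)) t :=
      ContinuousAt.div (by fun_prop) (by fun_prop) h1t.ne'
    have hmem := hsub _ (hzmem t ht)
    have hW_at : ContinuousAt W (a * t / (1 + a * t)) :=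
      (hWd _ hmem).continuousAt
    have hp_at : ContinuousAt (fun u : ℝ => u ^ m) (a * t / (1 + a * t)) :=
      Real.continuousAt_rpow_const _ _ (Or.inr hm.le)
    have hA : ContinuousAt ((fun u : ℝ => u ^ m) ∘ (fun t : ℝ => a * t / (1 + a * t))) t :=
      ContinuousAt.comp (f := fun t : ℝ => a * t / (1 + a * t)) hp_at hz_at
    have hBc : ContinuousAt (W ∘ (fun t : ℝ => a * t / (1 + a * t))) t :=
      ContinuousAt.comp (f := fun t : ℝ => a * t / (1 + a * t)) hW_at hz_at
    exact ((hA.mul hBc).div_const _).continuousWithinAt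
  -- integrability of the density
  have hint : IntervalIntegrable (fsDens m ms a) volume 0 x := by
    rw [intervalIntegrable_iff_integrableOn_Ioc_of_le hx]
    have hig : IntegrableOn (fun t : ℝ => a ^ m * t ^ (m-1) / betaR m ms) (Ioc 0 x) volume := by
      have h1 : IntervalIntegrable (fun t : ℝ => t ^ (m-1)) volume 0 x :=
        intervalIntegral.intervalIntegrable_rpow' (by linarith)
      have h2 := (h1.const_mul (a ^ m)).div_const (betaR m ms)
      rwa [intervalIntegrable_iff_integrableOn_Ioc_of_le hx] at h2
    apply Integrable.mono' hig
    · apply Measurable.aestronglyMeasurable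
      unfold fsDens
      apply Measurable.ite
      · exact measurableSet_lt measurable_const measurable_id
      · fun_prop
      · fun_prop
    · rw [ae_restrict_iff' measurableSet_Ioc]
      apply Filter.Eventually.of_forall
      intro t ht
      rw [fsDens, if_pos ht.1]
      have h1t : 0 < 1 + a * t := by nlinarith [ht.1]
      have hP : 1 ≤ (1 + a * t) ^ (m + ms) :=
        Real.one_le_rpow (by nlinarith [ht.1]) (by linarith)
      have ham : 0 < a ^ m := Real.rpow_pos_of_pos ha m
      have htm : 0 < t ^ (m - 1) := Real.rpow_pos_of_pos ht.1 (m - 1)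
      rw [Real.norm_eq_abs, abs_of_nonneg (by positivity)]
      rw [div_le_div_iff₀ (by nlinarith) hB]
      have hmul := mul_le_mul_of_nonneg_left hP (mul_nonneg (mul_nonneg ham.le htm.le) hB.le)
      nlinarith [hmul]
  -- derivative of G
  have hderiv : ∀ t ∈ Ioo (0:ℝ) x, HasDerivAt G (fsDens m ms a t) t := by
    intro t ht
    have h1t : 0 < 1 + a * t := by nlinarith [ht.1]
    set y : ℝ := a * t / (1 + a * t) with hydef
    have hymem : y ∈ Icc (0:ℝ) Z := hzmem t ⟨ht.1.le, ht.2.le⟩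
    have hy0 : 0 < y := div_pos (mul_pos ha ht.1) h1t
    have hy1 : y < 1 := lt_of_le_of_lt hymem.2 hZ1
    have hyr : |y| ≤ r := by
      rw [abs_of_nonneg hy0.le]; exact (hymem.2.trans_lt hZr).le
    have hz : HasDerivAt (fun t : ℝ => a * t / (1 + a * t)) (a / (1 + a * t) ^ 2) t := by
      have hnum : HasDerivAt (fun t : ℝ => a * t) a t := by
        simpa using (hasDerivAt_id t).const_mul a
      have hdenom : HasDerivAt (fun t : ℝ => 1 + a * t) a t := by
        simpa using ((hasDerivAt_id t).const_mul a).const_add 1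
      have := hnum.div hdenom h1t.ne'
      refine HasDerivAt.congr_deriv this (Eq.symm ?_)
      field_simp
      ring
    set W' : ℝ := ∑' n, d n * ((n:ℝ) * y ^ (n-1)) with hW'def
    have hW' : HasDerivAt W W' y := hWd y (hsub y hymem)
    have hp : HasDerivAt (fun u : ℝ => u ^ m) (m * y ^ (m-1)) y :=
      Real.hasDerivAt_rpow_const (Or.inl hy0.ne')
    have hprod : HasDerivAt (fun u : ℝ => u ^ m * W u)
        (m * y ^ (m-1) * W y + y ^ m * W') y := hp.mul hW'
    have hcomp : HasDerivAt (fun t : ℝ => (a * t / (1 + a * t)) ^ m * W (a * t / (1 + a * t)))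
        ((m * y ^ (m-1) * W y + y ^ m * W') * (a / (1 + a * t) ^ 2)) t :=
      HasDerivAt.comp (h₂ := fun u : ℝ => u ^ m * W u) t hprod hz
    have hG' := hcomp.div_const (m * betaR m ms)
    refine HasDerivAt.congr_deriv hG' (Eq.symm ?_)
    -- now the algebra: show fsDens = the derivative expression
    rw [fsDens, if_pos ht.1]
    have hE2 : y ^ m = y ^ (m - 1) * y := by
      conv_lhs => rw [show m = m - 1 + 1 by ring]
      rw [Real.rpow_add hy0, Real.rpow_one]
    have hkey := hkeyW y hy0.le hy1 hyr
    rw [← hW'def] at hkey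
    have hmain : m * y ^ (m-1) * W y + y ^ m * W'
        = y ^ (m-1) * (m * (1 - y) ^ (ms - 1)) := by
      rw [hE2, ← hkey]; ring
    rw [hmain]
    -- substitute y = a t / (1 + a t)
    have h1my : 1 - y = 1 / (1 + a * t) := by rw [hydef]; field_simp; ring
    have hyrp : y ^ (m - 1) = (a ^ (m-1) * t ^ (m-1)) / (1 + a * t) ^ (m-1) := by
      rw [hydef, Real.div_rpow (by nlinarith [ht.1]) h1t.le,
        Real.mul_rpow ha.le ht.1.le]
    have h1myrp : (1 - y) ^ (ms - 1) = 1 / (1 + a * t) ^ (ms - 1) := by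
      rw [h1my, Real.div_rpow zero_le_one h1t.le, Real.one_rpow]
    rw [hyrp, h1myrp]
    have hc2 : ((1 + a * t) ^ (2:ℕ) : ℝ) = (1 + a * t) ^ ((2:ℕ):ℝ) :=
      (Real.rpow_natCast _ 2).symm
    have hcomb : (1 + a * t) ^ (m-1) * ((1 + a * t) ^ (ms-1) * (1 + a * t) ^ ((2:ℕ):ℝ))
        = (1 + a * t) ^ (m + ms) := by
      rw [← Real.rpow_add h1t, ← Real.rpow_add h1t]
      congr 1
      push_cast
      ring
    have haa : a ^ (m-1) * a = a ^ m := by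
      conv_rhs => rw [show m = m - 1 + 1 by ring]
      rw [Real.rpow_add ha, Real.rpow_one]
    have hpos1 : (0:ℝ) < (1 + a * t) ^ (m-1) := Real.rpow_pos_of_pos h1t _
    have hpos2 : (0:ℝ) < (1 + a * t) ^ (ms-1) := Real.rpow_pos_of_pos h1t _
    have hpos3 : (0:ℝ) < (1 + a * t) ^ (m+ms) := Real.rpow_pos_of_pos h1t _
    rw [hc2, ← haa, ← hcomb]
    have hne1 := hpos1.ne'
    have hne2 := hpos2.ne'
    have hne3 : ((1 + a * t) ^ ((2:ℕ):ℝ) : ℝ) ≠ 0 := (Real.rpow_pos_of_pos h1t _).ne'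
    field_simp
  have hFTC := intervalIntegral.integral_eq_sub_of_hasDerivAt_of_le hx hcont hderiv hint
  rw [hFTC]
  have hG0 : G 0 = 0 := by
    rw [hGdef]
    simp [Real.zero_rpow hm.ne']
  have hGx : G x = Z ^ m * W Z / (m * betaR m ms) := by rw [hGdef]
  rw [hG0, hGx, hgauss, sub_zero]
end

section
/- Let m > 0, m_s > 0, a > 0 and let F(x) = ∫_0^x f(t) dt be the CDF of the Fisher–Snedecor F density f(t) = a^m t^{m-1} / (B(m, m_s) (1 + a t)^{m + m_s}). Then as x → 0⁺, F(x) = (a^m Γ(m + m_s) / (Γ(m + 1) Γ(m_s))) x^m + O(x^{m+1}); that is, x ↦ F(x) − (a^m Γ(m+m_s)/(Γ(m+1)Γ(m_s))) x^m is O(x^{m+1}) as x tends to 0 from the right. -/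
open MeasureTheory Real Set Asymptotics Filter

lemma one_sub_rpow_neg_le (p u : ℝ) (hp : 0 ≤ p) (hu : 0 ≤ u) :
    1 - (1 + u) ^ (-p) ≤ p * u := by
  have h1 : (0 : ℝ) < 1 + u := by linarith
  have hlog : Real.log (1 + u) ≤ u := by
    have := Real.log_le_sub_one_of_pos h1; linarith
  have h2 : (1 + u) ^ (-p) = Real.exp (Real.log (1 + u) * (-p)) := Real.rpow_def_of_pos h1 _
  have hlog0 : 0 ≤ Real.log (1 + u) := Real.log_nonneg (by linarith)
  have h3 : Real.exp (-(p * u)) ≤ (1 + u) ^ (-p) := by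
    rw [h2]
    apply Real.exp_le_exp.2
    nlinarith [mul_le_mul_of_nonneg_left hlog hp]
  have h4 : 1 - p * u ≤ Real.exp (-(p * u)) := by
    have := Real.add_one_le_exp (-(p * u)); linarith
  linarith

lemma fsDens_measurable (m ms a : ℝ) : Measurable (fsDens m ms a) := by
  unfold fsDens
  have h1 : Measurable fun x : ℝ => a ^ m * x ^ (m - 1) / (betaR m ms * (1 + a * x) ^ (m + ms)) := by
    fun_prop
  exact Measurable.ite (measurableSet_lt measurable_const measurable_id) h1 measurable_const

/-- As `x → 0⁺`, the CDF of the Fisher–Snedecor F distribution satisfies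
`F(x) = (aᵐ Γ(m + ms) / (Γ(m + 1) Γ(ms))) xᵐ + O(x^(m+1))`. -/
theorem fsCdf_asymptotic_origin (m ms a : ℝ) (hm : 0 < m) (hms : 0 < ms) (ha : 0 < a) :
    (fun x : ℝ => (∫ t in (0 : ℝ)..x, fsDens m ms a t) -
        (a ^ m * Real.Gamma (m + ms) / (Real.Gamma (m + 1) * Real.Gamma ms)) * x ^ m)
      =O[nhdsWithin 0 (Set.Ioi 0)] fun x : ℝ => x ^ (m + 1) := by
  have hΓm := Real.Gamma_pos_of_pos hm
  have hΓms := Real.Gamma_pos_of_pos hms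
  have hΓmms := Real.Gamma_pos_of_pos (add_pos hm hms)
  have hB : 0 < betaR m ms := div_pos (mul_pos hΓm hΓms) hΓmms
  have hap : 0 < a ^ m := Real.rpow_pos_of_pos ha m
  have hp : 0 < m + ms := add_pos hm hms
  set K : ℝ := a ^ m / betaR m ms * (m + ms) * a with hKdef
  have hK0 : 0 ≤ K := by positivity
  rw [isBigO_iff]
  refine ⟨K / (m + 1), ?_⟩
  filter_upwards [self_mem_nhdsWithin] with x hx
  have hx0 : 0 < x := hx
  -- integrability of the comparison function
  have hg_int : IntervalIntegrable (fun t : ℝ => a ^ m / betaR m ms * t ^ (m - 1))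
      volume 0 x :=
    (intervalIntegral.intervalIntegrable_rpow' (by linarith)).const_mul _
  -- pointwise bound for fsDens on Ι 0 x
  have hIoc : Set.uIoc (0 : ℝ) x = Set.Ioc 0 x := Set.uIoc_of_le hx0.le
  have hdens_eq : ∀ t ∈ Set.Ioc (0 : ℝ) x,
      fsDens m ms a t = a ^ m / betaR m ms * t ^ (m - 1) * (1 + a * t) ^ (-(m + ms)) := by
    intro t ht
    have ht0 : 0 < t := ht.1
    have hw : (0 : ℝ) < 1 + a * t := by nlinarith
    rw [fsDens, if_pos ht0, Real.rpow_neg hw.le]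
    field_simp
  have hwbound : ∀ t ∈ Set.Ioc (0 : ℝ) x, (1 + a * t) ^ (-(m + ms)) ≤ 1 := by
    intro t ht
    exact Real.rpow_le_one_of_one_le_of_nonpos (by nlinarith [ht.1, mul_pos ha ht.1])
      (by linarith)
  have hwpos : ∀ t ∈ Set.Ioc (0 : ℝ) x, 0 < (1 + a * t) ^ (-(m + ms)) := by
    intro t ht
    exact Real.rpow_pos_of_pos (by nlinarith [mul_pos ha ht.1]) _
  -- integrability of fsDens
  have hf_int : IntervalIntegrable (fsDens m ms a) volume 0 x := by
    apply hg_int.mono_fun'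
    · exact ((fsDens_measurable m ms a).aestronglyMeasurable).restrict
    · rw [hIoc]
      refine (ae_restrict_iff' measurableSet_Ioc).mpr ?_
      filter_upwards with t ht
      have h1 := hdens_eq t ht
      have h2 := hwbound t ht
      have h3 := hwpos t ht
      have htm : 0 < t ^ (m - 1) := Real.rpow_pos_of_pos ht.1 _
      rw [Real.norm_eq_abs, abs_of_nonneg (by rw [h1]; positivity)]
      rw [h1]
      nlinarith [mul_pos (mul_pos (div_pos hap hB) htm) h3]
  -- value of the comparison integral
  have hIg : ∫ t in (0 : ℝ)..x, a ^ m / betaR m ms * t ^ (m - 1)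
      = (a ^ m * Real.Gamma (m + ms) / (Real.Gamma (m + 1) * Real.Gamma ms)) * x ^ m := by
    rw [intervalIntegral.integral_const_mul, integral_rpow (Or.inl (by linarith))]
    have h1 : m - 1 + 1 = m := by ring
    rw [h1, Real.zero_rpow hm.ne', Real.Gamma_add_one hm.ne']
    rw [betaR]
    field_simp
    ring
  -- rewrite the difference as an integral
  have hsplit : (∫ t in (0 : ℝ)..x, fsDens m ms a t) -
      (a ^ m * Real.Gamma (m + ms) / (Real.Gamma (m + 1) * Real.Gamma ms)) * x ^ m
      = ∫ t in (0 : ℝ)..x, (fsDens m ms a t - a ^ m / betaR m ms * t ^ (m - 1)) := by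
    rw [intervalIntegral.integral_sub hf_int hg_int, hIg]
  -- pointwise bound on the difference
  have hdiff : ∀ t ∈ Set.Ioc (0 : ℝ) x,
      ‖fsDens m ms a t - a ^ m / betaR m ms * t ^ (m - 1)‖ ≤ K * t ^ m := by
    intro t ht
    have ht0 : 0 < t := ht.1
    have htm : 0 < t ^ (m - 1) := Real.rpow_pos_of_pos ht0 _
    have h1 := hdens_eq t ht
    have h2 := hwbound t ht
    have hu : 0 ≤ a * t := (mul_pos ha ht0).le
    have hbern : 1 - (1 + a * t) ^ (-(m + ms)) ≤ (m + ms) * (a * t) :=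
      one_sub_rpow_neg_le (m + ms) (a * t) hp.le hu
    have hrw : t ^ m = t ^ (m - 1) * t := by
      rw [← Real.rpow_add_one ht0.ne' (m - 1)]; ring_nf
    rw [h1, Real.norm_eq_abs]
    have hfac : a ^ m / betaR m ms * t ^ (m - 1) * (1 + a * t) ^ (-(m + ms)) -
        a ^ m / betaR m ms * t ^ (m - 1)
        = -(a ^ m / betaR m ms * t ^ (m - 1) * (1 - (1 + a * t) ^ (-(m + ms)))) := by ring
    rw [hfac, abs_neg, abs_of_nonneg (mul_nonneg (by positivity) (by linarith [h2]))]
    calc a ^ m / betaR m ms * t ^ (m - 1) * (1 - (1 + a * t) ^ (-(m + ms)))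
          ≤ a ^ m / betaR m ms * t ^ (m - 1) * ((m + ms) * (a * t)) := by
            apply mul_le_mul_of_nonneg_left hbern (by positivity)
        _ = K * t ^ m := by rw [hKdef, hrw]; ring
  -- bound the integral
  have hbound_int : IntervalIntegrable (fun t : ℝ => K * t ^ m) volume 0 x :=
    (intervalIntegral.intervalIntegrable_rpow' (by linarith)).const_mul _
  have hnorm : ‖∫ t in (0 : ℝ)..x, (fsDens m ms a t - a ^ m / betaR m ms * t ^ (m - 1))‖
      ≤ |∫ t in (0 : ℝ)..x, K * t ^ m| := by
    apply intervalIntegral.norm_integral_le_abs_of_norm_le _ hbound_int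
    rw [hIoc, ae_restrict_iff' measurableSet_Ioc]
    filter_upwards with t ht
    exact hdiff t ht
  have hIK : ∫ t in (0 : ℝ)..x, K * t ^ m = K / (m + 1) * x ^ (m + 1) := by
    rw [intervalIntegral.integral_const_mul, integral_rpow (Or.inl (by linarith)),
      Real.zero_rpow (by linarith : m + 1 ≠ 0)]
    ring
  rw [hsplit]
  calc ‖∫ t in (0 : ℝ)..x, (fsDens m ms a t - a ^ m / betaR m ms * t ^ (m - 1))‖
      ≤ |∫ t in (0 : ℝ)..x, K * t ^ m| := hnorm
    _ = K / (m + 1) * x ^ (m + 1) := by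
        rw [hIK]; exact abs_of_nonneg (by positivity)
    _ = K / (m + 1) * ‖x ^ (m + 1)‖ := by
        rw [Real.norm_eq_abs, abs_of_nonneg (Real.rpow_pos_of_pos hx0 (m + 1)).le]
end
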